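/- Let X = C([a,b],ℝ) with sup norm, g : (0,b-a] → ℝ weakly singular (continuous, decreasing, nonnegative, integrable), and N : [a,b]²×ℝ → ℝ continuous. Then the Urysohn operator K(x)(s) := ∫_a^b g(|s-t|) N(s,t,x(t)) dt maps X into X, i.e. K(x) is a continuous function of s for every x ∈ X. -/

import Mathlib

open Set MeasureTheory

/-- The kernel `t ↦ g |s - t|` is interval integrable on any subinterval of
`[s - c, s + c]`, given that `g` is integrable on `(0, c]`. -/
private lemma urysohn_kernel_integrable {c : ℝ} (hc : 0 < c) {g : ℝ → ℝ}
    (hgint : IntegrableOn g (Ioc 0 c)) (s : ℝ) {u v : ℝ}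
    (hu : u ∈ Icc (s - c) (s + c)) (hv : v ∈ Icc (s - c) (s + c)) :
    IntervalIntegrable (fun t => g |s - t|) volume u v := by
  have hg01 : IntervalIntegrable g volume 0 c :=
    (intervalIntegrable_iff_integrableOn_Ioc_of_le hc.le).mpr hgint
  have h1 : IntervalIntegrable (fun t => g (s - t)) volume (s - c) s := by
    simpa using (hg01.comp_sub_left s).symm
  have h1' : IntervalIntegrable (fun t => g |s - t|) volume (s - c) s := by
    rw [intervalIntegrable_iff_integrableOn_Ioc_of_le (by linarith)] at h1 ⊢
    refine h1.congr_fun (fun t ht => ?_) measurableSet_Ioc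
    rw [abs_of_nonneg (by linarith [ht.2] : (0:ℝ) ≤ s - t)]
  have h2 : IntervalIntegrable (fun t => g (t - s)) volume s (s + c) := by
    simpa [add_comm] using hg01.comp_sub_right s
  have h2' : IntervalIntegrable (fun t => g |s - t|) volume s (s + c) := by
    rw [intervalIntegrable_iff_integrableOn_Ioc_of_le (by linarith)] at h2 ⊢
    refine h2.congr_fun (fun t ht => ?_) measurableSet_Ioc
    rw [abs_sub_comm, abs_of_nonneg (by linarith [ht.1] : (0:ℝ) ≤ t - s)]
  refine (h1'.trans h2').mono_set ?_
  rw [uIcc_of_le (by linarith : s - c ≤ s + c)]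
  exact uIcc_subset_Icc hu hv

theorem urysohn_maps_into_continuous (a b : ℝ) (hab : a < b) (g : ℝ → ℝ)
    (hgc : ContinuousOn g (Ioc 0 (b - a)))
    (hganti : AntitoneOn g (Ioc 0 (b - a)))
    (hgpos : ∀ r ∈ Ioc 0 (b - a), 0 ≤ g r)
    (hgint : IntegrableOn g (Ioc 0 (b - a)))
    (N : ℝ → ℝ → ℝ → ℝ)
    (hN : Continuous fun p : ℝ × ℝ × ℝ => N p.1 p.2.1 p.2.2)
    (x : ℝ → ℝ) (hx : ContinuousOn x (Icc a b)) :
    ContinuousOn (fun s => ∫ t in a..b, g |s - t| * N s t (x t)) (Icc a b) := by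
  set c : ℝ := b - a with hcdef
  have hc : 0 < c := sub_pos.mpr hab
  -- the clamping map onto `[a, b]`
  set Q : ℝ → ℝ := fun s => max a (min s b) with hQdef
  have hQcont : Continuous Q := continuous_const.max (continuous_id.min continuous_const)
  have hQmem : ∀ s, Q s ∈ Icc a b := fun s =>
    ⟨le_max_left _ _, max_le hab.le (min_le_right _ _)⟩
  have hQeq : ∀ s ∈ Icc a b, Q s = s := by
    intro s hs
    simp only [hQdef]
    rw [min_eq_left hs.2, max_eq_right hs.1]
  -- globally continuous extension of `x`
  set X : ℝ → ℝ := fun t => x (Q t) with hXdef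
  have hXcont : Continuous X := hx.comp_continuous hQcont hQmem
  have hXeq : ∀ t ∈ Icc a b, X t = x t := fun t ht => by rw [hXdef]; simp [hQeq t ht]
  -- bound on the continuous part
  set f : ℝ × ℝ → ℝ := fun p => N p.1 p.2 (X p.2) with hfdef
  have hfcont : Continuous f :=
    hN.comp (continuous_fst.prodMk (continuous_snd.prodMk (hXcont.comp continuous_snd)))
  obtain ⟨M, hM⟩ :=
    (isCompact_Icc.prod isCompact_Icc).exists_bound_of_continuousOn hfcont.continuousOn
  set M1 : ℝ := M + 1 with hM1def
  have hM1pos : 0 < M1 := by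
    have h0 : ‖f (a, a)‖ ≤ M := hM (a, a) ⟨⟨le_rfl, hab.le⟩, ⟨le_rfl, hab.le⟩⟩
    have h1 := norm_nonneg (f (a, a))
    simp only [hM1def]; linarith
  have hMb : ∀ s ∈ Icc a b, ∀ t ∈ Icc a b, |N s t (X t)| ≤ M1 := by
    intro s hs t ht
    have h0 := hM (s, t) ⟨hs, ht⟩
    simp only [hM1def]
    calc |N s t (X t)| = ‖f (s, t)‖ := by simp [hfdef, Real.norm_eq_abs]
      _ ≤ M := h0
      _ ≤ M + 1 := by linarith
  -- truncated kernels
  set G : ℝ → ℝ → ℝ := fun δ r => g (max (min r c) δ) with hGdef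
  have hGarg : ∀ δ ∈ Ioc (0:ℝ) c, ∀ r : ℝ, max (min r c) δ ∈ Ioc 0 c := by
    intro δ hδ r
    exact ⟨lt_of_lt_of_le hδ.1 (le_max_right _ _), max_le (min_le_right _ _) hδ.2⟩
  have hGcont : ∀ δ ∈ Ioc (0:ℝ) c, Continuous (G δ) := by
    intro δ hδ
    refine ContinuousOn.comp_continuous (s := Icc δ c) (hgc.mono ?_)
      ((continuous_id.min continuous_const).max continuous_const) (fun r => ?_)
    · intro r hr
      exact ⟨lt_of_lt_of_le hδ.1 hr.1, hr.2⟩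
    · exact ⟨le_max_right _ _, max_le (min_le_right _ _) hδ.2⟩
  have hGle : ∀ δ ∈ Ioc (0:ℝ) c, ∀ r, G δ r ≤ g δ := by
    intro δ hδ r
    exact hganti hδ (hGarg δ hδ r) (le_max_right _ _)
  have hGpos : ∀ δ ∈ Ioc (0:ℝ) c, ∀ r, 0 ≤ G δ r := fun δ hδ r => hgpos _ (hGarg δ hδ r)
  have hGeq : ∀ δ ∈ Ioc (0:ℝ) c, ∀ r ∈ Icc δ c, G δ r = g r := by
    intro δ hδ r hr
    simp only [hGdef]
    rw [min_eq_left hr.2, max_eq_left hr.1]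
  have hGler : ∀ δ ∈ Ioc (0:ℝ) c, ∀ r ∈ Ioc (0:ℝ) c, G δ r ≤ g r := by
    intro δ hδ r hr
    rcases le_or_gt δ r with h | h
    · rw [hGeq δ hδ r ⟨h, hr.2⟩]
    · have he : G δ r = g δ := by
        simp only [hGdef]; rw [min_eq_left hr.2, max_eq_right h.le]
      rw [he]
      exact hganti hr hδ h.le
  -- the approximating family
  set F : ℝ → ℝ → ℝ → ℝ := fun δ s t => G δ |s - t| * N (Q s) t (X t) with hFdef
  -- Part 1: each approximation is continuous
  have hcontF : ∀ δ ∈ Ioc (0:ℝ) c, Continuous (fun s => ∫ t in a..b, F δ s t) := by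
    intro δ hδ
    have hker : ∀ s : ℝ, Continuous (fun t => G δ |s - t|) := fun s =>
      (hGcont δ hδ).comp ((continuous_const.sub continuous_id).abs)
    have hNs : ∀ s : ℝ, Continuous (fun t => N (Q s) t (X t)) := fun s =>
      hN.comp (continuous_const.prodMk (continuous_id.prodMk hXcont))
    refine intervalIntegral.continuous_of_dominated_interval
      (bound := fun _ => g δ * M1)
      (fun s => ((hker s).mul (hNs s)).aestronglyMeasurable) (fun s => ?_)
      intervalIntegrable_const ?_
    · filter_upwards with t ht
      rw [uIoc_of_le hab.le] at ht
      have h1 : abs (G δ |s - t|) ≤ g δ := by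
        rw [abs_of_nonneg (hGpos δ hδ _)]; exact hGle δ hδ _
      have h2 : |N (Q s) t (X t)| ≤ M1 := hMb _ (hQmem s) t ⟨ht.1.le, ht.2⟩
      calc ‖F δ s t‖ = abs (G δ |s - t|) * |N (Q s) t (X t)| := by
            simp only [hFdef, Real.norm_eq_abs, abs_mul]
        _ ≤ g δ * M1 := mul_le_mul h1 h2 (abs_nonneg _) ((abs_nonneg _).trans h1)
    · filter_upwards with t ht
      exact ((hGcont δ hδ).comp ((continuous_id.sub continuous_const).abs)).mul
        (hN.comp (hQcont.prodMk (continuous_const.prodMk continuous_const)))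
  -- Part 2: quantitative approximation
  have key : ∀ δ ∈ Ioc (0:ℝ) c, ∀ s ∈ Icc a b,
      abs ((∫ t in a..b, g |s - t| * N s t (x t)) - ∫ t in a..b, F δ s t)
        ≤ (2 * ∫ u in (0:ℝ)..δ, g u) * M1 := by
    intro δ hδ s hs
    have hsa : s - c ≤ a := by simp only [hcdef]; linarith [hs.2]
    have hsb : b ≤ s + c := by simp only [hcdef]; linarith [hs.1]
    have hmema : a ∈ Icc (s - c) (s + c) := ⟨hsa, by linarith [hs.1]⟩
    have hmemb : b ∈ Icc (s - c) (s + c) := ⟨by linarith [hs.2], hsb⟩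
    have hmemsδ₁ : s - δ ∈ Icc (s - c) (s + c) := ⟨by linarith [hδ.2], by linarith [hδ.1.le, hc.le]⟩
    have hmemsδ₂ : s + δ ∈ Icc (s - c) (s + c) := ⟨by linarith [hδ.1.le, hc.le], by linarith [hδ.2]⟩
    have hmems : s ∈ Icc (s - c) (s + c) := ⟨by linarith, by linarith⟩
    set a' : ℝ := max a (s - δ) with ha'def
    set b' : ℝ := min b (s + δ) with hb'def
    have ha'1 : a ≤ a' := le_max_left _ _
    have ha'2 : s - δ ≤ a' := le_max_right _ _
    have hb'1 : b' ≤ b := min_le_left _ _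
    have hb'2 : b' ≤ s + δ := min_le_right _ _
    have ha'b' : a' ≤ b' :=
      max_le (le_min hab.le (by linarith [hs.1, hδ.1]))
        (le_min (by linarith [hs.2, hδ.1]) (by linarith [hδ.1]))
    have hmema' : a' ∈ Icc (s - c) (s + c) :=
      ⟨le_trans hsa ha'1, le_trans (le_trans ha'b' hb'2) (by linarith [hδ.2])⟩
    have hmemb' : b' ∈ Icc (s - c) (s + c) :=
      ⟨le_trans hmema'.1 ha'b', le_trans hb'1 hsb⟩
    -- the comparison function
    set ψ : ℝ → ℝ := fun t => (g |s - t| - G δ |s - t|) * M1 with hψdef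
    have hGkc : Continuous (fun t => G δ |s - t|) :=
      (hGcont δ hδ).comp ((continuous_const.sub continuous_id).abs)
    have hψint : ∀ u v, u ∈ Icc (s - c) (s + c) → v ∈ Icc (s - c) (s + c) →
        IntervalIntegrable ψ volume u v := fun u v hu hv =>
      ((urysohn_kernel_integrable hc hgint s hu hv).sub
        (hGkc.intervalIntegrable u v)).mul_const _
    have hrc : ∀ t ∈ Icc a b, |s - t| ≤ c := by
      intro t ht
      rw [abs_sub_le_iff]
      constructor
      · simp only [hcdef]; linarith [hs.2, ht.1]
      · simp only [hcdef]; linarith [hs.1, ht.2]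
    have hψ0 : ∀ t ∈ Icc a b, δ ≤ |s - t| → ψ t = 0 := by
      intro t ht hdt
      simp only [hψdef]
      rw [hGeq δ hδ _ ⟨hdt, hrc t ht⟩, sub_self, zero_mul]
    -- the integrands
    have hNae : (fun t => N s t (X t)) =ᵐ[volume.restrict (Ioc a b)] fun t => N s t (x t) := by
      filter_upwards [ae_restrict_mem measurableSet_Ioc] with t ht
      rw [hXeq t ⟨ht.1.le, ht.2⟩]
    have hP : IntervalIntegrable (fun t => g |s - t| * N s t (x t)) volume a b := by
      rw [intervalIntegrable_iff_integrableOn_Ioc_of_le hab.le]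
      have hint : IntegrableOn (fun t => g |s - t|) (Ioc a b) volume := by
        rw [← intervalIntegrable_iff_integrableOn_Ioc_of_le hab.le]
        exact urysohn_kernel_integrable hc hgint s hmema hmemb
      have hNmeas : AEStronglyMeasurable (fun t => N s t (x t)) (volume.restrict (Ioc a b)) :=
        (hN.comp (continuous_const.prodMk
          (continuous_id.prodMk hXcont))).aestronglyMeasurable.congr hNae
      have hbd : ∀ᵐ t ∂(volume.restrict (Ioc a b)), ‖N s t (x t)‖ ≤ M1 := by
        filter_upwards [ae_restrict_mem measurableSet_Ioc] with t ht
        rw [Real.norm_eq_abs, ← hXeq t ⟨ht.1.le, ht.2⟩]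
        exact hMb s hs t ⟨ht.1.le, ht.2⟩
      have := hint.bdd_mul hNmeas hbd
      exact this.congr (Filter.Eventually.of_forall fun t => mul_comm _ _)
    have hFi : IntervalIntegrable (F δ s) volume a b :=
      (hGkc.mul (hN.comp (continuous_const.prodMk
        (continuous_id.prodMk hXcont)))).intervalIntegrable a b
    -- main estimate
    have hsub : (∫ t in a..b, g |s - t| * N s t (x t)) - ∫ t in a..b, F δ s t
        = ∫ t in a..b, (g |s - t| * N s t (x t) - F δ s t) :=
      (intervalIntegral.integral_sub hP hFi).symm
    have step1 : abs (∫ t in a..b, (g |s - t| * N s t (x t) - F δ s t))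
        ≤ ∫ t in a..b, abs (g |s - t| * N s t (x t) - F δ s t) :=
      intervalIntegral.abs_integral_le_integral_abs hab.le
    have hneS : ∀ᵐ t ∂(volume.restrict (Icc a b)), t ≠ s := by
      refine (ae_iff.mpr ?_).filter_mono (ae_mono Measure.restrict_le_self)
      simp only [ne_eq, not_not]
      simp [measure_singleton]
    have step2 : (∫ t in a..b, abs (g |s - t| * N s t (x t) - F δ s t)) ≤ ∫ t in a..b, ψ t := by
      refine intervalIntegral.integral_mono_ae_restrict hab.le ((hP.sub hFi).abs)
        (hψint a b hmema hmemb) ?_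
      filter_upwards [hneS, ae_restrict_mem measurableSet_Icc] with t hts ht
      have hrpos : 0 < |s - t| := abs_pos.mpr (sub_ne_zero.mpr (Ne.symm hts))
      have h1 : G δ |s - t| ≤ g |s - t| := hGler δ hδ _ ⟨hrpos, hrc t ht⟩
      have h2 : |N s t (x t)| ≤ M1 := by rw [← hXeq t ht]; exact hMb s hs t ht
      have hFe : F δ s t = G δ |s - t| * N s t (x t) := by
        simp only [hFdef]; rw [hQeq s hs, hXeq t ht]
      show abs (g |s - t| * N s t (x t) - F δ s t) ≤ ψ t
      rw [hFe, ← sub_mul, abs_mul, abs_of_nonneg (sub_nonneg.mpr h1)]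
      exact mul_le_mul_of_nonneg_left h2 (sub_nonneg.mpr h1)
    -- localize the ψ-integral
    have hzero1 : (∫ t in a..a', ψ t) = 0 := by
      rcases le_or_gt (s - δ) a with h | h
      · rw [show a' = a from max_eq_left h, intervalIntegral.integral_same]
      · have ha'e : a' = s - δ := max_eq_right h.le
        have heq : EqOn ψ (fun _ => 0) (uIcc a a') := by
          intro t ht
          rw [uIcc_of_le ha'1] at ht
          have htb : t ≤ b := le_trans ht.2 (by rw [ha'e]; linarith [hδ.1, hs.2])
          have hdt : δ ≤ |s - t| := by
            have ht2 : t ≤ s - δ := ha'e ▸ ht.2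
            rw [abs_of_nonneg (by linarith [hδ.1] : (0:ℝ) ≤ s - t)]
            linarith
          exact hψ0 t ⟨ht.1, htb⟩ hdt
        rw [intervalIntegral.integral_congr heq, intervalIntegral.integral_zero]
    have hzero2 : (∫ t in b'..b, ψ t) = 0 := by
      rcases le_or_gt b (s + δ) with h | h
      · rw [show b' = b from min_eq_left h, intervalIntegral.integral_same]
      · have hb'e : b' = s + δ := min_eq_right h.le
        have heq : EqOn ψ (fun _ => 0) (uIcc b' b) := by
          intro t ht
          rw [uIcc_of_le hb'1] at ht
          have hta : a ≤ t := le_trans (by rw [hb'e]; linarith [hδ.1, hs.1]) ht.1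
          have hdt : δ ≤ |s - t| := by
            have ht1 : s + δ ≤ t := hb'e ▸ ht.1
            rw [abs_sub_comm, abs_of_nonneg (by linarith [hδ.1] : (0:ℝ) ≤ t - s)]
            linarith
          exact hψ0 t ⟨hta, ht.2⟩ hdt
        rw [intervalIntegral.integral_congr heq, intervalIntegral.integral_zero]
    have step3 : (∫ t in a..b, ψ t) = ∫ t in a'..b', ψ t := by
      rw [← intervalIntegral.integral_add_adjacent_intervals (hψint a a' hmema hmema')
        (hψint a' b hmema' hmemb),
        ← intervalIntegral.integral_add_adjacent_intervals (hψint a' b' hmema' hmemb')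
        (hψint b' b hmemb' hmemb), hzero1, hzero2]
      ring
    -- compare with the kernel integral
    have hkint1 : IntervalIntegrable (fun t => g |s - t| * M1) volume a' b' :=
      (urysohn_kernel_integrable hc hgint s hmema' hmemb').mul_const _
    have hkint2 : IntervalIntegrable (fun t => g |s - t| * M1) volume (s - δ) (s + δ) :=
      (urysohn_kernel_integrable hc hgint s hmemsδ₁ hmemsδ₂).mul_const _
    have step4 : (∫ t in a'..b', ψ t) ≤ ∫ t in a'..b', g |s - t| * M1 := by
      refine intervalIntegral.integral_mono_on ha'b' (hψint a' b' hmema' hmemb') hkint1 ?_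
      intro t _
      simp only [hψdef]
      exact mul_le_mul_of_nonneg_right (by linarith [hGpos δ hδ |s - t|]) hM1pos.le
    have step5 : (∫ t in a'..b', g |s - t| * M1) ≤ ∫ t in (s - δ)..(s + δ), g |s - t| * M1 := by
      refine intervalIntegral.integral_mono_interval ha'2 ha'b' hb'2 ?_ hkint2
      have hneS' : ∀ᵐ t ∂(volume.restrict (Ioc (s - δ) (s + δ))), t ≠ s := by
        refine (ae_iff.mpr ?_).filter_mono (ae_mono Measure.restrict_le_self)
        simp only [ne_eq, not_not]
        simp [measure_singleton]
      filter_upwards [hneS', ae_restrict_mem measurableSet_Ioc] with t hts ht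
      have hrpos : 0 < |s - t| := abs_pos.mpr (sub_ne_zero.mpr (Ne.symm hts))
      have hrc' : |s - t| ≤ c := by
        rw [abs_sub_le_iff]
        exact ⟨by linarith [ht.1, hδ.2], by linarith [ht.2, hδ.2]⟩
      exact mul_nonneg (hgpos _ ⟨hrpos, hrc'⟩) hM1pos.le
    have hL : (∫ t in (s - δ)..s, g |s - t| * M1) = (∫ u in (0:ℝ)..δ, g u) * M1 := by
      have heq : EqOn (fun t => g |s - t| * M1) (fun t => g (s - t) * M1) (uIcc (s - δ) s) := by
        intro t ht
        rw [uIcc_of_le (by linarith [hδ.1] : s - δ ≤ s)] at ht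
        simp only
        rw [abs_of_nonneg (by linarith [ht.2] : (0:ℝ) ≤ s - t)]
      rw [intervalIntegral.integral_congr heq, intervalIntegral.integral_mul_const,
        intervalIntegral.integral_comp_sub_left (fun u => g u) s,
        show s - s = (0:ℝ) by ring, show s - (s - δ) = δ by ring]
    have hR : (∫ t in s..(s + δ), g |s - t| * M1) = (∫ u in (0:ℝ)..δ, g u) * M1 := by
      have heq : EqOn (fun t => g |s - t| * M1) (fun t => g (t - s) * M1) (uIcc s (s + δ)) := by
        intro t ht
        rw [uIcc_of_le (by linarith [hδ.1] : s ≤ s + δ)] at ht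
        simp only
        rw [abs_sub_comm, abs_of_nonneg (by linarith [ht.1] : (0:ℝ) ≤ t - s)]
      rw [intervalIntegral.integral_congr heq, intervalIntegral.integral_mul_const,
        intervalIntegral.integral_comp_sub_right (fun u => g u) s,
        show s - s = (0:ℝ) by ring, show s + δ - s = δ by ring]
    have step6 : (∫ t in (s - δ)..(s + δ), g |s - t| * M1) = (2 * ∫ u in (0:ℝ)..δ, g u) * M1 := by
      rw [← intervalIntegral.integral_add_adjacent_intervals
        ((urysohn_kernel_integrable hc hgint s hmemsδ₁ hmems).mul_const _)
        ((urysohn_kernel_integrable hc hgint s hmems hmemsδ₂).mul_const _), hL, hR]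
      ring
    calc abs ((∫ t in a..b, g |s - t| * N s t (x t)) - ∫ t in a..b, F δ s t)
        = abs (∫ t in a..b, (g |s - t| * N s t (x t) - F δ s t)) := by rw [hsub]
      _ ≤ ∫ t in a..b, abs (g |s - t| * N s t (x t) - F δ s t) := step1
      _ ≤ ∫ t in a..b, ψ t := step2
      _ = ∫ t in a'..b', ψ t := step3
      _ ≤ ∫ t in a'..b', g |s - t| * M1 := step4
      _ ≤ ∫ t in (s - δ)..(s + δ), g |s - t| * M1 := step5
      _ = (2 * ∫ u in (0:ℝ)..δ, g u) * M1 := step6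
  -- the filter
  haveI hne : (nhdsWithin (0:ℝ) (Ioc 0 c)).NeBot := by
    refine mem_closure_iff_nhdsWithin_neBot.mp ?_
    rw [closure_Ioc hc.ne]
    exact ⟨le_rfl, hc.le⟩
  -- the small integral tends to 0
  have htend : Filter.Tendsto (fun δ => ∫ u in (0:ℝ)..δ, g u)
      (nhdsWithin 0 (Ioc 0 c)) (nhds 0) := by
    have hprim : ContinuousOn (fun y => ∫ u in Ioc (0:ℝ) y, g u) (Icc 0 c) :=
      intervalIntegral.continuousOn_primitive (Iff.mpr integrableOn_Icc_iff_integrableOn_Ioc hgint)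
    have h0 := (hprim 0 ⟨le_rfl, hc.le⟩).tendsto
    simp only [Ioc_self, Measure.restrict_empty, integral_zero_measure] at h0
    have h1 := h0.mono_left (nhdsWithin_mono _ Ioc_subset_Icc_self)
    refine Filter.Tendsto.congr' ?_ h1
    filter_upwards [self_mem_nhdsWithin] with δ hδ
    rw [intervalIntegral.integral_of_le hδ.1.le]
  -- uniform convergence
  have huni : TendstoUniformlyOn (fun δ s => ∫ t in a..b, F δ s t)
      (fun s => ∫ t in a..b, g |s - t| * N s t (x t))
      (nhdsWithin 0 (Ioc 0 c)) (Icc a b) := by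
    rw [Metric.tendstoUniformlyOn_iff]
    intro ε hε
    have hε' : 0 < ε / (2 * M1) := by positivity
    have h2 := Metric.tendsto_nhds.mp htend _ hε'
    filter_upwards [h2, self_mem_nhdsWithin] with δ h1 hδ
    intro s hs
    rw [Real.dist_eq]
    have hkey := key δ hδ s hs
    rw [Real.dist_eq, sub_zero] at h1
    have h4 : |∫ u in (0:ℝ)..δ, g u| * (2 * M1) < ε := (lt_div_iff₀ (by positivity)).mp h1
    exact lt_of_le_of_lt hkey
      (by nlinarith [le_abs_self (∫ u in (0:ℝ)..δ, g u), hM1pos, h4])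
  refine huni.continuousOn (Filter.Eventually.frequently ?_)
  filter_upwards [self_mem_nhdsWithin] with δ hδ
  exact (hcontF δ hδ).continuousOn
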